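/- Fix θ ∈ (0,π) and let Q_u = ⋂_{m∈ℤ} H_m ⊂ tildeL with H_m = {(z,α,r) ∈ tildeL : r·cos(α+mθ) ≤ 1 or |α+mθ| ≥ π/2}. Let ∂Q_u denote the frontier of Q_u in tildeL. Then the restriction to ∂Q_u of the projection s : tildeL → tildeG, s(z,α,r) = (z/λ, α, r/λ) with λ = √(r²−|z|²), is a homeomorphism from ∂Q_u onto tildeG = {(z,α,r) ∈ tildeL : r²−|z|² = 1}, and it is equivariant with respect to the ℤ-action m·(z,α,r) = (z·e^{imθ}, α−mθ, r) (which preserves both ∂Q_u and tildeG). -/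

import Mathlib

open Real

/-- `tildeL = {(z,α,r) ∈ ℂ×ℝ×ℝ : 0 < r, |z| < r}` (an open subset of `ℂ×ℝ×ℝ`,
so the frontier within `tildeL` is the ambient frontier intersected with `tildeL`). -/
def tL : Set (ℂ × ℝ × ℝ) := {x | 0 < x.2.2 ∧ ‖x.1‖ < x.2.2}

/-- `tildeG = {(z,α,r) ∈ tildeL : r² − |z|² = 1}`, the universal cover of `SU(1,1)`. -/
def tG : Set (ℂ × ℝ × ℝ) := {x ∈ tL | x.2.2 ^ 2 - ‖x.1‖ ^ 2 = 1}

/-- `λ(z,α,r) = √(r² − |z|²)`. -/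
noncomputable def lamb (x : ℂ × ℝ × ℝ) : ℝ := Real.sqrt (x.2.2 ^ 2 - ‖x.1‖ ^ 2)

/-- The bundle projection `s(z,α,r) = (z/λ, α, r/λ)` with `λ = √(r²−|z|²)`. -/
noncomputable def sproj (x : ℂ × ℝ × ℝ) : ℂ × ℝ × ℝ :=
  ((lamb x)⁻¹ • x.1, x.2.1, (lamb x)⁻¹ * x.2.2)

/-- The `ℤ`-action `m·(z,α,r) = (z·e^{imθ}, α−mθ, r)` (left translation by powers of
the lifted rotation `r_d = (0,−θ,1)`). -/
noncomputable def zact (θ : ℝ) (m : ℤ) (x : ℂ × ℝ × ℝ) : ℂ × ℝ × ℝ :=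
  (x.1 * Complex.exp ((((m : ℝ) * θ : ℝ) : ℂ) * Complex.I), x.2.1 - (m : ℝ) * θ, x.2.2)

/-- `H_m = {(z,α,r) ∈ tildeL : r·cos(α+mθ) ≤ 1 or |α+mθ| ≥ π/2}`. -/
noncomputable def Hhalf (θ : ℝ) (m : ℤ) : Set (ℂ × ℝ × ℝ) :=
  {x ∈ tL | x.2.2 * Real.cos (x.2.1 + (m : ℝ) * θ) ≤ 1 ∨ π / 2 ≤ |x.2.1 + (m : ℝ) * θ|}

/-- The prismatic set `Q_u = ⋂_{m∈ℤ} H_m`. -/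
noncomputable def Qu (θ : ℝ) : Set (ℂ × ℝ × ℝ) := ⋂ m : ℤ, Hhalf θ m

lemma isOpen_tL : IsOpen tL := by
  have h1 : IsOpen {x : ℂ × ℝ × ℝ | 0 < x.2.2} :=
    isOpen_lt continuous_const (continuous_snd.comp continuous_snd)
  have h2 : IsOpen {x : ℂ × ℝ × ℝ | ‖x.1‖ < x.2.2} :=
    isOpen_lt (continuous_fst.norm) (continuous_snd.comp continuous_snd)
  exact h1.inter h2

noncomputable def dd (θ α : ℝ) : ℝ := |α - θ * round (α / θ)|

lemma dd_min (θ : ℝ) (hθ : 0 < θ) (α : ℝ) (n : ℤ) : dd θ α ≤ |α - θ * n| := by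
  rcases eq_or_ne n (round (α/θ)) with h | h
  · simp [dd, h]
  have key : |α/θ - round (α/θ)| ≤ |α/θ - n| := by
    have h1 : (1:ℝ) ≤ |(round (α/θ) : ℝ) - n| := by
      have : round (α/θ) - n ≠ 0 := sub_ne_zero.mpr (Ne.symm h)
      have := Int.one_le_abs this
      calc (1:ℝ) ≤ |((round (α/θ) - n : ℤ) : ℝ)| := by exact_mod_cast this
      _ = |(round (α/θ) : ℝ) - n| := by push_cast; ring_nf
    have h2 := abs_sub_round (α/θ)
    calc |α/θ - round (α/θ)| ≤ 1/2 := h2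
    _ ≤ |(round (α/θ):ℝ) - n| - |α/θ - round (α/θ)| := by linarith
    _ ≤ |α/θ - n| := by
        have := abs_sub_abs_le_abs_sub ((round (α/θ):ℝ) - n) ((round (α/θ):ℝ) - (α/θ))
        rw [abs_sub_comm ((round (α/θ):ℝ)) (α/θ)] at this
        have e : (round (α/θ):ℝ) - n - ((round (α/θ):ℝ) - α/θ) = α/θ - n := by ring
        rw [e] at this
        linarith [this, le_abs_self ((round (α/θ):ℝ) - n), abs_nonneg (α/θ - n)]
  have e1 : dd θ α = θ * |α/θ - round (α/θ)| := by
    rw [dd, show θ * |α/θ - (round (α/θ):ℝ)| = |θ * (α/θ - round (α/θ))| by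
      rw [abs_mul, abs_of_pos hθ]]
    congr 1; field_simp
  have e2 : |α - θ * n| = θ * |α/θ - n| := by
    rw [show θ * |α/θ - (n:ℝ)| = |θ * (α/θ - n)| by rw [abs_mul, abs_of_pos hθ]]
    congr 1; field_simp
  rw [e1, e2]
  exact mul_le_mul_of_nonneg_left key hθ.le

lemma dd_nonneg (θ α : ℝ) : 0 ≤ dd θ α := abs_nonneg _

lemma dd_le_half (θ : ℝ) (hθ : 0 < θ) (α : ℝ) : dd θ α ≤ θ/2 := by
  have e1 : dd θ α = θ * |α/θ - round (α/θ)| := by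
    rw [dd, show θ * |α/θ - (round (α/θ):ℝ)| = |θ * (α/θ - round (α/θ))| by
      rw [abs_mul, abs_of_pos hθ]]
    congr 1; field_simp
  have := abs_sub_round (α/θ)
  rw [e1]
  calc θ * |α/θ - round (α/θ)| ≤ θ * (1/2) := mul_le_mul_of_nonneg_left this hθ.le
  _ = θ/2 := by ring

lemma cos_dd_pos (θ : ℝ) (hθ : 0 < θ) (hθπ : θ < π) (α : ℝ) : 0 < Real.cos (dd θ α) := by
  apply Real.cos_pos_of_mem_Ioo
  constructor
  · linarith [dd_nonneg θ α, Real.pi_pos]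
  · linarith [dd_le_half θ hθ α]

lemma dd_shift (θ : ℝ) (hθ : 0 < θ) (α : ℝ) (m : ℤ) : dd θ (α - m * θ) = dd θ α := by
  have e : (α - m*θ)/θ = α/θ + (-m : ℤ) := by push_cast; field_simp; ring
  rw [dd, e, round_add_intCast, dd]
  congr 1
  push_cast
  ring

lemma continuous_dd (θ : ℝ) (hθ : 0 < θ) : Continuous (dd θ) := by
  have lip : LipschitzWith 1 (dd θ) := by
    apply LipschitzWith.of_dist_le_mul
    intro a b
    rw [Real.dist_eq, Real.dist_eq]
    simp only [NNReal.coe_one, one_mul]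
    have key : ∀ u v : ℝ, dd θ u ≤ dd θ v + |u - v| := by
      intro u v
      calc dd θ u ≤ |u - θ * round (v/θ)| := dd_min θ hθ u _
      _ ≤ |v - θ * round (v/θ)| + |u - v| := by
          have : u - θ * round (v/θ) = (v - θ * round (v/θ)) + (u - v) := by ring
          rw [this]; exact abs_add_le _ _
      _ = dd θ v + |u - v| := rfl
    have h1 := key a b
    have h2 := key b a
    rw [abs_sub_comm b a] at h2
    rw [abs_le]
    constructor <;> [linarith [abs_nonneg (a-b)]; linarith]
  exact lip.continuous

lemma dd_eq_abs (θ : ℝ) (hθ : 0 < θ) (α : ℝ) : ∃ n : ℤ, dd θ α = |α - θ * n| :=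
  ⟨round (α / θ), rfl⟩


lemma Qu_eq (θ : ℝ) (hθ : 0 < θ) (hθπ : θ < π) :
    Qu θ = {x ∈ tL | x.2.2 * Real.cos (dd θ x.2.1) ≤ 1} := by
  ext x
  simp only [Qu, Set.mem_iInter, Hhalf, Set.mem_setOf_eq, Set.mem_sep_iff]
  constructor
  · rintro h
    obtain ⟨n, hn⟩ := dd_eq_abs θ hθ x.2.1
    obtain ⟨hL, hc⟩ := h (-n)
    refine ⟨hL, ?_⟩
    have e : x.2.1 + ((-n : ℤ):ℝ) * θ = x.2.1 - θ * n := by push_cast; ring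
    have habs : |x.2.1 + ((-n:ℤ):ℝ) * θ| = dd θ x.2.1 := by rw [e]; exact hn.symm
    have hsmall : dd θ x.2.1 < π/2 := by
      have := dd_le_half θ hθ x.2.1; linarith
    rcases hc with hc | hc
    · have : Real.cos (x.2.1 + ((-n:ℤ):ℝ) * θ) = Real.cos (dd θ x.2.1) := by
        rw [← Real.cos_abs, habs]
      rwa [this] at hc
    · rw [habs] at hc; linarith
  · rintro ⟨hL, hc⟩ m
    refine ⟨hL, ?_⟩
    by_cases hbig : π/2 ≤ |x.2.1 + (m:ℝ) * θ|
    · exact Or.inr hbig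
    push_neg at hbig
    left
    have hd : dd θ x.2.1 ≤ |x.2.1 + (m:ℝ) * θ| := by
      have := dd_min θ hθ x.2.1 (-m)
      simpa [sub_neg_eq_add, mul_comm] using this
    have hmono : Real.cos (x.2.1 + (m:ℝ)*θ) ≤ Real.cos (dd θ x.2.1) := by
      rw [← Real.cos_abs (x.2.1 + (m:ℝ)*θ)]
      apply Real.cos_le_cos_of_nonneg_of_le_pi (dd_nonneg θ x.2.1) _ hd
      linarith [Real.pi_pos]
    calc x.2.2 * Real.cos (x.2.1 + (m:ℝ)*θ) ≤ x.2.2 * Real.cos (dd θ x.2.1) :=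
          mul_le_mul_of_nonneg_left hmono hL.1.le
    _ ≤ 1 := hc

lemma frontier_Qu (θ : ℝ) (hθ : 0 < θ) (hθπ : θ < π) :
    frontier (Qu θ) ∩ tL = {x ∈ tL | x.2.2 * Real.cos (dd θ x.2.1) = 1} := by
  have hg : Continuous (fun x : ℂ × ℝ × ℝ => x.2.2 * Real.cos (dd θ x.2.1)) :=
    (continuous_snd.comp continuous_snd).mul
      (Real.continuous_cos.comp ((continuous_dd θ hθ).comp (continuous_fst.comp continuous_snd)))
  set g : ℂ × ℝ × ℝ → ℝ := fun x => x.2.2 * Real.cos (dd θ x.2.1) with hgdef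
  have hQ : Qu θ = tL ∩ g ⁻¹' (Set.Iic 1) := by
    rw [Qu_eq θ hθ hθπ]; rfl
  ext x
  simp only [Set.mem_inter_iff, Set.mem_sep_iff, Set.mem_setOf_eq]
  constructor
  · rintro ⟨hf, hL⟩
    refine ⟨hL, ?_⟩
    have h1 : g x ≤ 1 := by
      have : x ∈ closure (Qu θ) := hf.1
      have hsub : closure (Qu θ) ⊆ g ⁻¹' (Set.Iic 1) := by
        apply closure_minimal _ (IsClosed.preimage hg isClosed_Iic)
        rw [hQ]; exact Set.inter_subset_right
      exact hsub this
    have h2 : ¬ g x < 1 := by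
      intro hlt
      have hopen : IsOpen (tL ∩ g ⁻¹' (Set.Iio 1)) :=
        isOpen_tL.inter (IsOpen.preimage hg isOpen_Iio)
      have hsub : tL ∩ g ⁻¹' (Set.Iio 1) ⊆ Qu θ := by
        rw [hQ]; exact Set.inter_subset_inter_right _ (Set.preimage_mono Set.Iio_subset_Iic_self)
      have : x ∈ interior (Qu θ) :=
        interior_maximal hsub hopen ⟨hL, hlt⟩
      exact hf.2 this
    exact le_antisymm h1 (not_lt.mp h2)
  · rintro ⟨hL, hone⟩
    have hc := cos_dd_pos θ hθ hθπ x.2.1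
    refine ⟨⟨?_, ?_⟩, hL⟩
    · apply subset_closure
      rw [hQ]; exact ⟨hL, le_of_eq hone⟩
    · intro hint
      rw [mem_interior_iff_mem_nhds, Metric.mem_nhds_iff] at hint
      obtain ⟨ε, hε, hball⟩ := hint
      set y : ℂ × ℝ × ℝ := (x.1, x.2.1, x.2.2 + ε/2) with hy
      have hdy : dist y x < ε := by
        rw [Prod.dist_eq, Prod.dist_eq]
        simp only [hy, dist_self, Real.dist_eq]
        rw [show x.2.2 + ε/2 - x.2.2 = ε/2 by ring, abs_of_pos (by linarith)]
        simp only [max_lt_iff]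
        refine ⟨hε, by linarith, by linarith⟩
      have hyQ : y ∈ Qu θ := hball hdy
      rw [hQ] at hyQ
      have : (x.2.2 + ε/2) * Real.cos (dd θ x.2.1) ≤ 1 := hyQ.2
      nlinarith


lemma norm_zact1 (θ : ℝ) (m : ℤ) (x : ℂ × ℝ × ℝ) : ‖(zact θ m x).1‖ = ‖x.1‖ := by
  simp only [zact, norm_mul, Complex.norm_exp_ofReal_mul_I, mul_one]

lemma lamb_zact (θ : ℝ) (m : ℤ) (x : ℂ × ℝ × ℝ) : lamb (zact θ m x) = lamb x := by
  simp only [lamb]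
  rw [show ‖(zact θ m x).1‖ = ‖x.1‖ from norm_zact1 θ m x]
  rfl

lemma lamb_pos {x : ℂ × ℝ × ℝ} (hx : x ∈ tL) : 0 < lamb x := by
  apply Real.sqrt_pos.mpr
  have h1 : ‖x.1‖ < x.2.2 := hx.2
  have h0 : 0 ≤ ‖x.1‖ := norm_nonneg _
  nlinarith

lemma sq_lamb {x : ℂ × ℝ × ℝ} (hx : x ∈ tL) : (lamb x)^2 = x.2.2^2 - ‖x.1‖^2 := by
  apply Real.sq_sqrt
  have h1 : ‖x.1‖ < x.2.2 := hx.2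
  have h0 : 0 ≤ ‖x.1‖ := norm_nonneg _
  nlinarith

theorem stmt18 (θ : ℝ) (hθ : 0 < θ) (hθπ : θ < π) :
    (∀ m : ℤ, ∀ x ∈ frontier (Qu θ) ∩ tL, zact θ m x ∈ frontier (Qu θ) ∩ tL) ∧
    (∀ m : ℤ, ∀ x ∈ tG, zact θ m x ∈ tG) ∧
    (∀ m : ℤ, ∀ x ∈ frontier (Qu θ) ∩ tL, sproj (zact θ m x) = zact θ m (sproj x)) ∧
    ∃ h : ↥(frontier (Qu θ) ∩ tL) ≃ₜ ↥tG,
      ∀ x : ↥(frontier (Qu θ) ∩ tL), (h x : ℂ × ℝ × ℝ) = sproj (x : ℂ × ℝ × ℝ) := by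
  have hF := frontier_Qu θ hθ hθπ
  have hcpos : ∀ α : ℝ, 0 < Real.cos (dd θ α) := cos_dd_pos θ hθ hθπ
  refine ⟨?_, ?_, ?_, ?_⟩
  · -- frontier invariance
    intro m x hx
    rw [hF] at hx ⊢
    obtain ⟨⟨hr, hz⟩, hone⟩ := hx
    refine ⟨⟨hr, ?_⟩, ?_⟩
    · rw [norm_zact1]; exact hz
    · show (zact θ m x).2.2 * Real.cos (dd θ (zact θ m x).2.1) = 1
      have : (zact θ m x).2.1 = x.2.1 - (m:ℝ)*θ := rfl
      rw [this, dd_shift θ hθ x.2.1 m]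
      exact hone
  · -- tG invariance
    intro m x hx
    obtain ⟨⟨hr, hz⟩, hone⟩ := hx
    exact ⟨⟨hr, by rw [norm_zact1]; exact hz⟩, by rw [show (zact θ m x).2.2 = x.2.2 from rfl, norm_zact1]; exact hone⟩
  · -- equivariance
    intro m x _
    have hl := lamb_zact θ m x
    show ((lamb (zact θ m x))⁻¹ • (zact θ m x).1, (zact θ m x).2.1,
      (lamb (zact θ m x))⁻¹ * (zact θ m x).2.2) = zact θ m (sproj x)
    rw [hl]
    refine Prod.ext ?_ rfl
    show (lamb x)⁻¹ • (x.1 * Complex.exp ((((m : ℝ) * θ : ℝ) : ℂ) * Complex.I))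
      = ((lamb x)⁻¹ • x.1) * Complex.exp ((((m : ℝ) * θ : ℝ) : ℂ) * Complex.I)
    rw [smul_mul_assoc]
  · -- homeomorphism
    have memB : ∀ x : ℂ × ℝ × ℝ, x ∈ frontier (Qu θ) ∩ tL ↔
        (x ∈ tL ∧ x.2.2 * Real.cos (dd θ x.2.1) = 1) := by
      intro x; rw [hF]; rfl
    -- forward map lands in tG
    have fwd : ∀ x ∈ frontier (Qu θ) ∩ tL, sproj x ∈ tG := by
      intro x hx
      rw [memB] at hx
      obtain ⟨hL, hone⟩ := hx
      have hlam := lamb_pos hL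
      have hlam2 := sq_lamb hL
      refine ⟨⟨?_, ?_⟩, ?_⟩
      · exact mul_pos (inv_pos.mpr hlam) hL.1
      · show ‖(lamb x)⁻¹ • x.1‖ < (lamb x)⁻¹ * x.2.2
        rw [norm_smul, Real.norm_eq_abs, abs_of_pos (inv_pos.mpr hlam)]
        exact mul_lt_mul_of_pos_left hL.2 (inv_pos.mpr hlam)
      · show ((lamb x)⁻¹ * x.2.2)^2 - ‖(lamb x)⁻¹ • x.1‖^2 = 1
        rw [norm_smul, Real.norm_eq_abs, abs_of_pos (inv_pos.mpr hlam)]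
        rw [show ((lamb x)⁻¹ * x.2.2)^2 - ((lamb x)⁻¹ * ‖x.1‖)^2
          = ((lamb x)^2)⁻¹ * (x.2.2^2 - ‖x.1‖^2) by ring, ← hlam2]
        exact inv_mul_cancel₀ (pow_ne_zero 2 hlam.ne')
    -- inverse map
    set Ginv : ℂ × ℝ × ℝ → ℂ × ℝ × ℝ := fun x =>
      ((x.2.2 * Real.cos (dd θ x.2.1))⁻¹ • x.1, x.2.1,
        (x.2.2 * Real.cos (dd θ x.2.1))⁻¹ * x.2.2) with hG
    have bwd : ∀ x ∈ tG, Ginv x ∈ frontier (Qu θ) ∩ tL := by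
      intro x hx
      obtain ⟨⟨hr, hz⟩, hone⟩ := hx
      have hc := hcpos x.2.1
      have hrc : 0 < x.2.2 * Real.cos (dd θ x.2.1) := mul_pos hr hc
      rw [memB]
      refine ⟨⟨?_, ?_⟩, ?_⟩
      · exact mul_pos (inv_pos.mpr hrc) hr
      · show ‖(x.2.2 * Real.cos (dd θ x.2.1))⁻¹ • x.1‖
            < (x.2.2 * Real.cos (dd θ x.2.1))⁻¹ * x.2.2
        rw [norm_smul, Real.norm_eq_abs, abs_of_pos (inv_pos.mpr hrc)]
        exact mul_lt_mul_of_pos_left hz (inv_pos.mpr hrc)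
      · show ((x.2.2 * Real.cos (dd θ x.2.1))⁻¹ * x.2.2) * Real.cos (dd θ x.2.1) = 1
        field_simp
    have lamb_Ginv : ∀ x ∈ tG, lamb (Ginv x) = (x.2.2 * Real.cos (dd θ x.2.1))⁻¹ := by
      intro x hx
      obtain ⟨⟨hr, hz⟩, hone⟩ := hx
      have hc := hcpos x.2.1
      have hrc : 0 < x.2.2 * Real.cos (dd θ x.2.1) := mul_pos hr hc
      have hmu : 0 < (x.2.2 * Real.cos (dd θ x.2.1))⁻¹ := inv_pos.mpr hrc
      show Real.sqrt (((x.2.2 * Real.cos (dd θ x.2.1))⁻¹ * x.2.2)^2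
          - ‖(x.2.2 * Real.cos (dd θ x.2.1))⁻¹ • x.1‖^2) = _
      rw [norm_smul, Real.norm_eq_abs, abs_of_pos hmu]
      rw [show ((x.2.2 * Real.cos (dd θ x.2.1))⁻¹ * x.2.2)^2
          - ((x.2.2 * Real.cos (dd θ x.2.1))⁻¹ * ‖x.1‖)^2
          = ((x.2.2 * Real.cos (dd θ x.2.1))⁻¹)^2 * (x.2.2^2 - ‖x.1‖^2) by ring]
      rw [hone, mul_one]
      exact Real.sqrt_sq hmu.le
    refine ⟨Homeomorph.mk (Equiv.mk
      (fun x => ⟨sproj x, fwd x x.2⟩)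
      (fun x => ⟨Ginv x, bwd x x.2⟩) ?_ ?_) ?_ ?_, fun x => rfl⟩
    · -- left inverse
      rintro ⟨x, hx⟩
      have hx' := (memB x).mp hx
      obtain ⟨hL, hone⟩ := hx'
      have hlam := lamb_pos hL
      apply Subtype.ext
      show Ginv (sproj x) = x
      have e1 : (sproj x).2.1 = x.2.1 := rfl
      have e2 : (sproj x).2.2 = (lamb x)⁻¹ * x.2.2 := rfl
      have e3 : (sproj x).1 = (lamb x)⁻¹ • x.1 := rfl
      simp only [hG, e1, e2, e3]
      have key : ((lamb x)⁻¹ * x.2.2 * Real.cos (dd θ x.2.1))⁻¹ = lamb x := by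
        rw [mul_assoc, hone, mul_one, inv_inv]
      rw [key]
      refine Prod.ext ?_ (Prod.ext rfl ?_)
      · simp only [smul_smul]
        rw [mul_inv_cancel₀ hlam.ne', one_smul]
      · simp only
        field_simp
    · -- right inverse
      rintro ⟨x, hx⟩
      obtain ⟨⟨hr, hz⟩, hone⟩ := hx
      have hc := hcpos x.2.1
      have hrc : 0 < x.2.2 * Real.cos (dd θ x.2.1) := mul_pos hr hc
      apply Subtype.ext
      show sproj (Ginv x) = x
      have hlamG := lamb_Ginv x ⟨⟨hr, hz⟩, hone⟩
      simp only [sproj, hlamG]; simp only [hG, inv_inv]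
      refine Prod.ext ?_ (Prod.ext rfl ?_)
      · simp only [smul_smul]
        rw [mul_inv_cancel₀ hrc.ne', one_smul]
      · simp only
        field_simp
    · -- continuity of forward
      apply Continuous.subtype_mk
      have hlambC : Continuous lamb := by
        have h0 : Continuous fun x : ℂ × ℝ × ℝ => x.2.2 ^ 2 - ‖x.1‖ ^ 2 :=
          ((continuous_snd.comp continuous_snd).pow 2).sub ((continuous_fst.norm).pow 2)
        exact Real.continuous_sqrt.comp h0
      have hlc : Continuous fun x : ↥(frontier (Qu θ) ∩ tL) => lamb (x : ℂ × ℝ × ℝ) :=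
        hlambC.comp continuous_subtype_val
      have hlnz : ∀ x : ↥(frontier (Qu θ) ∩ tL), lamb (x : ℂ × ℝ × ℝ) ≠ 0 := by
        intro x
        exact (lamb_pos ((memB _).mp x.2).1).ne'
      have hlinv : Continuous fun x : ↥(frontier (Qu θ) ∩ tL) => (lamb (x : ℂ × ℝ × ℝ))⁻¹ :=
        Continuous.inv₀ hlc hlnz
      refine Continuous.prodMk ?_ (Continuous.prodMk ?_ ?_)
      · exact hlinv.smul (continuous_fst.comp continuous_subtype_val)
      · exact (continuous_fst.comp (continuous_snd.comp continuous_subtype_val))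
      · exact hlinv.mul (continuous_snd.comp (continuous_snd.comp continuous_subtype_val))
    · -- continuity of inverse
      apply Continuous.subtype_mk
      have hgC : Continuous fun x : ℂ × ℝ × ℝ => x.2.2 * Real.cos (dd θ x.2.1) :=
        (continuous_snd.comp continuous_snd).mul
          (Real.continuous_cos.comp ((continuous_dd θ hθ).comp (continuous_fst.comp continuous_snd)))
      have hgc : Continuous fun x : ↥tG =>
          ((x : ℂ × ℝ × ℝ).2.2 * Real.cos (dd θ (x : ℂ × ℝ × ℝ).2.1)) :=
        hgC.comp continuous_subtype_val
      have hgnz : ∀ x : ↥tG, ((x : ℂ × ℝ × ℝ).2.2 * Real.cos (dd θ (x : ℂ × ℝ × ℝ).2.1)) ≠ 0 := by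
        intro x
        exact (mul_pos x.2.1.1 (hcpos _)).ne'
      have hginv := Continuous.inv₀ hgc hgnz
      refine Continuous.prodMk ?_ (Continuous.prodMk ?_ ?_)
      · exact hginv.smul (continuous_fst.comp continuous_subtype_val)
      · exact (continuous_fst.comp (continuous_snd.comp continuous_subtype_val))
      · exact hginv.mul (continuous_snd.comp (continuous_snd.comp continuous_subtype_val))
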